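/- arXiv:2404.01982 — 2 statements merged into one kernel-verified Lean document; each statement's English description precedes it below -/
import Mathlib

section
/- Let p(z) = zⁿ + aₙ z^(n−1) + … + a₂ z + a₁ be a monic complex polynomial of degree n ≥ 2, with zeros λ₁, …, λₙ (with multiplicity). Then Σᵢ |λᵢ| ≤ √(n·(n − 1 + Σᵢ |aᵢ|²)). -/
open Polynomial

variable {E : Type*} [NormedAddCommGroup E] [InnerProductSpace ℂ E] [FiniteDimensional ℂ E]

local notation "⟪" x ", " y "⟫" => @inner ℂ _ _ x y

omit [FiniteDimensional ℂ E] in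
lemma parseval' {ι : Type*} [Fintype ι] (b : OrthonormalBasis ι ℂ E) (x : E) :
    ‖x‖ ^ 2 = ∑ i, ‖⟪b i, x⟫‖ ^ 2 := by
  have h1 : ‖x‖ = ‖b.repr x‖ := (b.repr.norm_map x).symm
  rw [h1, EuclideanSpace.norm_eq, Real.sq_sqrt (by positivity)]
  congr 1; ext i; rw [b.repr_apply_apply]

lemma hs_adj {ι κ : Type*} [Fintype ι] [Fintype κ] (T : E →ₗ[ℂ] E)
    (b : OrthonormalBasis ι ℂ E) (c : OrthonormalBasis κ ℂ E) :
    ∑ i, ‖T (b i)‖ ^ 2 = ∑ j, ‖T.adjoint (c j)‖ ^ 2 := by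
  have h1 : ∀ i, ‖T (b i)‖ ^ 2 = ∑ j, ‖⟪c j, T (b i)⟫‖ ^ 2 := fun i => parseval' c _
  have h2 : ∀ j, ‖T.adjoint (c j)‖ ^ 2 = ∑ i, ‖⟪b i, T.adjoint (c j)⟫‖ ^ 2 :=
    fun j => parseval' b _
  simp only [h1, h2]
  rw [Finset.sum_comm]
  congr 1; ext j; congr 1; ext i
  rw [← LinearMap.adjoint_inner_left, ← norm_inner_symm]

lemma hs_indep {ι κ : Type*} [Fintype ι] [Fintype κ] (T : E →ₗ[ℂ] E)
    (b : OrthonormalBasis ι ℂ E) (c : OrthonormalBasis κ ℂ E) :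
    ∑ i, ‖T (b i)‖ ^ 2 = ∑ j, ‖T (c j)‖ ^ 2 := by
  rw [hs_adj T b c, hs_adj T.adjoint c c, LinearMap.adjoint_adjoint]

noncomputable def coeffVec (n : ℕ) : ℂ[X] →ₗ[ℂ] EuclideanSpace ℂ (Fin n) where
  toFun q := WithLp.toLp 2 (fun j => q.coeff j)
  map_add' q r := WithLp.ofLp_injective 2 <| funext fun j => by simp
  map_smul' c q := WithLp.ofLp_injective 2 <| funext fun j => by simp

@[simp] lemma coeffVec_apply (n : ℕ) (q : ℂ[X]) (j : Fin n) : coeffVec n q j = q.coeff j := rfl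

noncomputable def compOp (n : ℕ) (hn : 2 ≤ n) (p : ℂ[X]) :
    EuclideanSpace ℂ (Fin n) →ₗ[ℂ] EuclideanSpace ℂ (Fin n) where
  toFun f := WithLp.toLp 2 fun j : Fin n => (if j.1 = 0 then 0 else f ⟨j.1 - 1, lt_of_le_of_lt (Nat.sub_le _ _) j.2⟩)
      - p.coeff j.1 * f ⟨n - 1, by omega⟩
  map_add' f g := WithLp.ofLp_injective 2 <| funext fun j => by
    by_cases h : j.1 = 0 <;> simp [h] <;> ring
  map_smul' c f := WithLp.ofLp_injective 2 <| funext fun j => by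
    by_cases h : j.1 = 0 <;> simp [h] <;> ring

lemma compOp_coeffVec (n : ℕ) (hn : 2 ≤ n) (p q : ℂ[X]) :
    compOp n hn p (coeffVec n q) = coeffVec n (X * q - C (q.coeff (n - 1)) * p) := by
  ext j
  show _ = (X * q - C (q.coeff (n - 1)) * p).coeff j
  rw [coeff_sub, coeff_C_mul]
  rcases h : j.1 with _ | i
  · simp [compOp, h, Polynomial.mul_coeff_zero, mul_comm]
  · simp only [compOp, LinearMap.coe_mk, AddHom.coe_mk, h, coeff_X_mul]
    simp [h, mul_comm]

theorem stmt17 (n : ℕ) (hn : 2 ≤ n) (p : Polynomial ℂ) (hmonic : p.Monic)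
    (hdeg : p.natDegree = n) :
    ((p.roots.map fun z => ‖z‖).sum) ≤
      Real.sqrt (n * ((n - 1 : ℝ) + ∑ i ∈ Finset.range n, ‖p.coeff i‖ ^ 2)) := by
  classical
  set l : List ℂ := p.roots.toList with hldef
  have hcoe : (l : Multiset ℂ) = p.roots := p.roots.coe_toList
  have hl : l.length = n := by
    rw [← Multiset.coe_card, hcoe,
      (splits_iff_card_roots.mp (IsAlgClosed.splits p)), hdeg]
  set lam : Fin n → ℂ := fun k => l.get (Fin.cast hl.symm k) with hlam
  -- the flag polynomials
  set S : ℕ → ℂ[X] := fun j => (((l.drop j).map fun z => X - C z : List ℂ[X]) : Multiset ℂ[X]).prod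
    with hSdef
  have hS0 : S 0 = p := by
    rw [hSdef]
    simp only [List.drop_zero]
    rw [← Multiset.map_coe, hcoe]
    exact ((IsAlgClosed.splits p).eq_prod_roots_of_monic hmonic).symm
  have hSmonic : ∀ j, (S j).Monic := by
    intro j
    rw [hSdef]
    simp only [← Multiset.map_coe]
    exact monic_multiset_prod_of_monic _ _ fun z _ => monic_X_sub_C z
  have hSdeg : ∀ j, (S j).natDegree = n - j := by
    intro j
    rw [hSdef]
    simp only [← Multiset.map_coe]
    rw [natDegree_multiset_prod_of_monic _ (fun q hq => by
      rw [Multiset.mem_map] at hq; obtain ⟨z, _, rfl⟩ := hq; exact monic_X_sub_C z)]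
    rw [Multiset.map_map]
    simp [Function.comp, natDegree_X_sub_C, hl]
  have hSrec : ∀ k : Fin n, S k.1 = (X - C (lam k)) * S (k.1 + 1) := by
    intro k
    have hk : (k : ℕ) < l.length := by rw [hl]; exact k.2
    rw [hSdef]
    simp only
    rw [List.drop_eq_getElem_cons hk, List.map_cons]
    rw [← Multiset.cons_coe, Multiset.prod_cons]
    congr 1
  -- the flag vectors
  set v : Fin n → EuclideanSpace ℂ (Fin n) := fun k => coeffVec n (S (k.1 + 1)) with hv
  set T := compOp n hn p with hT
  -- linear independence
  have hvcoord_hi : ∀ (k j : Fin n), n - 1 - k.1 < j.1 → v k j = 0 := by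
    intro k j hj
    show (S (k.1 + 1)).coeff j = 0
    apply coeff_eq_zero_of_natDegree_lt
    rw [hSdeg]
    omega
  have hvcoord_diag : ∀ k : Fin n, v k ⟨n - 1 - k.1, by omega⟩ = 1 := by
    intro k
    show (S (k.1 + 1)).coeff (n - 1 - k.1) = 1
    have h1 := (hSmonic (k.1 + 1)).coeff_natDegree
    rwa [hSdeg, show n - (k.1 + 1) = n - 1 - k.1 by omega] at h1
  have hli : LinearIndependent ℂ v := by
    rw [Fintype.linearIndependent_iff]
    intro g hg
    have key : ∀ m : ℕ, ∀ k : Fin n, k.1 = m → g k = 0 := by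
      intro m
      induction m using Nat.strong_induction_on with
      | _ m ih =>
        intro k hk
        have h0 : ∑ i : Fin n, g i * v i ⟨n - 1 - k.1, by omega⟩ = 0 := by
          have h := congrArg (EuclideanSpace.projₗ (𝕜 := ℂ) (⟨n - 1 - k.1, by omega⟩ : Fin n)) hg
          rw [map_sum] at h
          simpa [smul_eq_mul] using h
        rw [Finset.sum_eq_single k] at h0
        · rw [hvcoord_diag k, mul_one] at h0; exact h0
        · intro b _ hb
          rcases lt_or_gt_of_ne (fun h : b.1 = k.1 => hb (Fin.ext h)) with h | h
          · rw [ih b.1 (by omega) b rfl, zero_mul]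
          · rw [hvcoord_hi b ⟨n - 1 - k.1, by omega⟩ (by simp; omega), mul_zero]
        · intro h; exact absurd (Finset.mem_univ k) h
    exact fun k => key k.1 k rfl
  -- Gram-Schmidt orthonormal basis
  haveI : WellFoundedLT (Fin n) := Finite.to_wellFoundedLT
  have hfr : Module.finrank ℂ (EuclideanSpace ℂ (Fin n)) = Fintype.card (Fin n) := by
    simp [finrank_euclideanSpace_fin]
  set u : OrthonormalBasis (Fin n) ℂ (EuclideanSpace ℂ (Fin n)) := InnerProductSpace.gramSchmidtOrthonormalBasis hfr v with hudef
  have hgsne : ∀ k, InnerProductSpace.gramSchmidtNormed ℂ v k ≠ 0 := by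
    intro k h
    have h1 := InnerProductSpace.gramSchmidtNormed_unit_length k hli
    rw [h] at h1; simp at h1
  have huk : ∀ k, u k = InnerProductSpace.gramSchmidtNormed ℂ v k := fun k =>
    InnerProductSpace.gramSchmidtOrthonormalBasis_apply hfr (hgsne k)
  -- action of T on the flag
  have hTv : ∀ k : Fin n, T (v k) - lam k • v k ∈ Submodule.span ℂ (v '' Set.Iio k) := by
    intro k
    by_cases hk0 : k.1 = 0
    · have hc : (S (k.1 + 1)).coeff (n - 1) = 1 := by
        have h1 := (hSmonic (k.1 + 1)).coeff_natDegree
        rwa [hSdeg, show n - (k.1 + 1) = n - 1 by omega] at h1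
      have hteq : T (v k) = lam k • v k := by
        rw [hv]; simp only
        rw [hT, compOp_coeffVec, hc, map_one, one_mul]
        have htv : X * S (k.1 + 1) - p = C (lam k) * S (k.1 + 1) := by
          rw [← hS0, show (0 : ℕ) = k.1 from hk0.symm, hSrec k]; ring
        rw [htv, ← Polynomial.smul_eq_C_mul, map_smul]
      rw [hteq, sub_self]
      exact Submodule.zero_mem _
    · have hc : (S (k.1 + 1)).coeff (n - 1) = 0 :=
        coeff_eq_zero_of_natDegree_lt (by rw [hSdeg]; omega)
      have hkn : k.1 - 1 < n := by omega
      have hteq : T (v k) = v ⟨k.1 - 1, hkn⟩ + lam k • v k := by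
        rw [hv]; simp only
        rw [hT, compOp_coeffVec, hc, map_zero, zero_mul, sub_zero]
        have hx : X * S (k.1 + 1) = S ((k.1 - 1) + 1) + C (lam k) * S (k.1 + 1) := by
          rw [show (k.1 - 1) + 1 = k.1 by omega, hSrec k]; ring
        rw [hx, map_add, ← Polynomial.smul_eq_C_mul, map_smul]
      rw [hteq, add_sub_cancel_right]
      exact Submodule.subset_span ⟨⟨k.1 - 1, hkn⟩, by simp [Fin.lt_def]; omega, rfl⟩
  -- diagonal entries
  have hdiag : ∀ k : Fin n, inner ℂ (u k) (T (u k)) = lam k := by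
    intro k
    have hukspan : u k ∈ Submodule.span ℂ (v '' Set.Iic k) := by
      rw [huk, InnerProductSpace.gramSchmidtNormed]
      exact Submodule.smul_mem _ _ (InnerProductSpace.gramSchmidt_mem_span ℂ v le_rfl)
    set L : EuclideanSpace ℂ (Fin n) →ₗ[ℂ] EuclideanSpace ℂ (Fin n) :=
      T - lam k • LinearMap.id with hL
    have hle : Submodule.span ℂ (v '' Set.Iic k) ≤
        Submodule.comap L (Submodule.span ℂ (v '' Set.Iio k)) := by
      rw [Submodule.span_le]
      rintro _ ⟨j, hj, rfl⟩
      simp only [SetLike.mem_coe, Submodule.mem_comap]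
      have hLvj : L (v j) = (T (v j) - lam j • v j) + (lam j - lam k) • v j := by
        simp only [hL, LinearMap.sub_apply, LinearMap.smul_apply, LinearMap.id_apply, sub_smul]
        abel
      rw [hLvj]
      rcases eq_or_lt_of_le (Set.mem_Iic.mp hj) with heq | hlt
      · subst heq
        simpa using hTv j
      · refine Submodule.add_mem _ ?_ ?_
        · exact Submodule.span_mono (Set.image_mono fun x hx =>
            lt_trans (Set.mem_Iio.mp hx) hlt) (hTv j)
        · exact Submodule.smul_mem _ _ (Submodule.subset_span ⟨j, hlt, rfl⟩)
    have hz : L (u k) ∈ Submodule.span ℂ (v '' Set.Iio k) := hle hukspan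
    have horth : Submodule.span ℂ (v '' Set.Iio k) ≤ (ℂ ∙ (u k))ᗮ := by
      rw [Submodule.span_le]
      rintro _ ⟨j, hj, rfl⟩
      rw [SetLike.mem_coe, Submodule.mem_orthogonal_singleton_iff_inner_right]
      rw [huk, InnerProductSpace.gramSchmidtNormed, inner_smul_left, InnerProductSpace.gramSchmidt_inv_triangular ℂ v hj]
      simp
    have h0 : inner ℂ (u k) (L (u k)) = 0 :=
      Submodule.mem_orthogonal_singleton_iff_inner_right.mp (horth hz)
    have hnorm : inner ℂ (u k) (u k) = 1 := by
      rw [inner_self_eq_norm_sq_to_K, u.orthonormal.1 k]; norm_num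
    simp only [hL, LinearMap.sub_apply, LinearMap.smul_apply, LinearMap.id_apply,
      inner_sub_right, inner_smul_right, hnorm, mul_one] at h0
    exact sub_eq_zero.mp h0
  -- per-root bound
  have hbound : ∀ k, ‖lam k‖ ^ 2 ≤ ‖T (u k)‖ ^ 2 := by
    intro k
    have h1 : ‖lam k‖ = ‖inner ℂ (u k) (T (u k))‖ := by
      rw [hdiag]
    have h2 : ‖inner ℂ (u k) (T (u k))‖ ≤ ‖T (u k)‖ := by
      have := norm_inner_le_norm (𝕜 := ℂ) (u k) (T (u k))
      rwa [u.orthonormal.1 k, one_mul] at this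
    rw [h1]
    exact pow_le_pow_left₀ (norm_nonneg _) h2 2
  -- standard basis computation
  set e := EuclideanSpace.basisFun (Fin n) ℂ with he
  have hek : ∀ k : Fin n, e k = coeffVec n (X ^ k.1) := by
    intro k
    rw [he, EuclideanSpace.basisFun_apply]
    ext j
    rw [EuclideanSpace.single_apply]
    show _ = ((X : ℂ[X]) ^ k.1).coeff j
    rw [coeff_X_pow]
    simp [Fin.ext_iff, eq_comm]
  have hTek_lt : ∀ k : Fin n, k.1 < n - 1 → ‖T (e k)‖ = 1 := by
    intro k hkn
    rw [hek, hT, compOp_coeffVec]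
    have h1 : ((X : ℂ[X]) ^ k.1).coeff (n - 1) = 0 := by
      rw [coeff_X_pow]; simp; omega
    rw [h1, map_zero, zero_mul, sub_zero, ← pow_succ']
    rw [← hek ⟨k.1 + 1, by omega⟩]
    exact e.orthonormal.1 _
  have hTelast : ‖T (e ⟨n - 1, by omega⟩)‖ ^ 2 =
      ∑ i ∈ Finset.range n, ‖p.coeff i‖ ^ 2 := by
    rw [hek, hT, compOp_coeffVec]
    have h1 : ((X : ℂ[X]) ^ ((⟨n - 1, by omega⟩ : Fin n) : ℕ)).coeff (n - 1) = 1 := by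
      simp [coeff_X_pow]
    rw [h1, map_one, one_mul]
    have hXn : (X : ℂ[X]) * X ^ ((⟨n - 1, by omega⟩ : Fin n) : ℕ) = X ^ n := by
      rw [← pow_succ']
      congr 1
      show n - 1 + 1 = n
      omega
    rw [hXn, EuclideanSpace.norm_eq, Real.sq_sqrt (by positivity)]
    simp only [coeffVec_apply]
    rw [Fin.sum_univ_eq_sum_range (fun i => ‖((X : ℂ[X]) ^ n - p).coeff i‖ ^ 2)]
    refine Finset.sum_congr rfl fun i hi => ?_
    rw [Finset.mem_range] at hi
    rw [coeff_sub, coeff_X_pow, if_neg (by omega), zero_sub, norm_neg]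
  have htotal : ∑ k : Fin n, ‖T (e k)‖ ^ 2 =
      (n - 1 : ℝ) + ∑ i ∈ Finset.range n, ‖p.coeff i‖ ^ 2 := by
    have hklast : (⟨n - 1, by omega⟩ : Fin n) ∈ Finset.univ := Finset.mem_univ _
    have hstep : ∀ k ∈ Finset.univ.erase (⟨n - 1, by omega⟩ : Fin n), ‖T (e k)‖ ^ 2 = 1 := by
      intro k hk
      rw [Finset.mem_erase] at hk
      have hlt : k.1 < n - 1 := by
        rcases lt_or_eq_of_le (Nat.le_sub_one_of_lt k.2) with h | h
        · exact h
        · exact absurd (Fin.ext h) hk.1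
      rw [hTek_lt k hlt, one_pow]
    rw [← Finset.add_sum_erase _ _ hklast, hTelast, Finset.sum_congr rfl hstep,
      Finset.sum_const, Finset.card_erase_of_mem hklast, Finset.card_univ, Fintype.card_fin,
      nsmul_eq_mul, mul_one]
    push_cast [Nat.cast_sub (show 1 ≤ n by omega)]
    ring
  -- sum of |roots|
  have hroots : (p.roots.map fun z => ‖z‖).sum = ∑ k : Fin n, ‖lam k‖ := by
    rw [← hcoe, Multiset.map_coe, Multiset.sum_coe]
    rw [show l.map (fun z => ‖z‖) =
        List.ofFn ((fun z => ‖z‖) ∘ l.get) by rw [← List.map_ofFn, List.ofFn_get]]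
    rw [List.sum_ofFn]
    exact Fintype.sum_equiv (finCongr hl) (fun i => ‖l.get i‖)
      (fun k => ‖lam k‖) (fun i => rfl)
  rw [hroots]
  -- final assembly
  have hS : (0:ℝ) ≤ ∑ i ∈ Finset.range n, ‖p.coeff i‖ ^ 2 :=
    Finset.sum_nonneg fun i _ => by positivity
  have hn1 : (0:ℝ) ≤ (n : ℝ) - 1 := by
    have : (2:ℝ) ≤ n := by exact_mod_cast hn
    linarith
  have hA0 : 0 ≤ ∑ k : Fin n, ‖lam k‖ :=
    Finset.sum_nonneg fun k _ => (norm_nonneg _)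
  rw [Real.le_sqrt hA0 (by positivity)]
  have hcs := Finset.sum_mul_sq_le_sq_mul_sq Finset.univ (fun _ : Fin n => (1:ℝ))
    (fun k => ‖lam k‖)
  simp only [one_mul, one_pow] at hcs
  have hsum2 : ∑ k : Fin n, ‖lam k‖ ^ 2 ≤
      (n - 1 : ℝ) + ∑ i ∈ Finset.range n, ‖p.coeff i‖ ^ 2 := by
    calc ∑ k : Fin n, ‖lam k‖ ^ 2 ≤ ∑ k : Fin n, ‖T (u k)‖ ^ 2 :=
          Finset.sum_le_sum fun k _ => hbound k
      _ = ∑ k : Fin n, ‖T (e k)‖ ^ 2 := hs_indep T u e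
      _ = _ := htotal
  calc (∑ k : Fin n, ‖lam k‖) ^ 2
      ≤ (∑ _k : Fin n, (1:ℝ)) * ∑ k : Fin n, ‖lam k‖ ^ 2 := hcs
    _ = (n : ℝ) * ∑ k : Fin n, ‖lam k‖ ^ 2 := by
        rw [Finset.sum_const, Finset.card_univ, Fintype.card_fin]; simp
    _ ≤ (n : ℝ) * ((n - 1 : ℝ) + ∑ i ∈ Finset.range n, ‖p.coeff i‖ ^ 2) := by
        apply mul_le_mul_of_nonneg_left hsum2 (by positivity)
end

section
/- Let p(z) = zⁿ + aₙ z^(n−1) + … + a₂ z + a₁ be a monic complex polynomial of degree n ≥ 2 and let λ be a zero of p of smallest absolute value. Then |λ| ≤ (1/n)·√(n·(n − 1 + Σᵢ |aᵢ|²)). -/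
open Polynomial

lemma pow_card_le_prod_aux (a : ℝ) (ha : 0 ≤ a) :
    ∀ s : Multiset ℝ, (∀ x ∈ s, a ≤ x) → a ^ Multiset.card s ≤ s.prod := by
  intro s
  induction s using Multiset.induction with
  | empty => simp
  | cons b t ih =>
    intro h
    rw [Multiset.card_cons, Multiset.prod_cons, pow_succ, mul_comm]
    have hb : a ≤ b := h b (Multiset.mem_cons_self b t)
    have ht := ih fun x hx => h x (Multiset.mem_cons_of_mem hx)
    have : (0:ℝ) ≤ a ^ Multiset.card t := pow_nonneg ha _
    nlinarith

theorem stmt18 (n : ℕ) (hn : 2 ≤ n) (p : Polynomial ℂ) (hmonic : p.Monic)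
    (hdeg : p.natDegree = n) (lam : ℂ) (hroot : p.IsRoot lam)
    (hmin : ∀ μ : ℂ, p.IsRoot μ → ‖lam‖ ≤ ‖μ‖) :
    ‖lam‖ ≤
      (1 / n) * Real.sqrt (n * ((n - 1 : ℝ) + ∑ i ∈ Finset.range n, ‖p.coeff i‖ ^ 2)) := by
  have hp0 : p ≠ 0 := hmonic.ne_zero
  have hsplits : p.Splits := IsAlgClosed.splits p
  have hcard : p.roots.card = n := by
    rw [← hdeg]
    exact (Polynomial.splits_iff_card_roots.mp hsplits)
  -- |λ|^n ≤ |coeff 0|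
  have h1 : ‖lam‖ ^ n ≤ ‖p.coeff 0‖ := by
    have habs : ‖p.coeff 0‖ = (p.roots.map (fun z : ℂ => ‖z‖)).prod := by
      rw [hsplits.coeff_zero_eq_prod_roots_of_monic hmonic, norm_mul, norm_pow, norm_neg,
        norm_one, one_pow, one_mul]
      exact map_multiset_prod (normHom (α := ℂ)) _
    rw [habs]
    calc ‖lam‖ ^ n = ‖lam‖ ^ (p.roots.map (fun z : ℂ => ‖z‖)).card := by
          rw [Multiset.card_map, hcard]
      _ ≤ (p.roots.map (fun z : ℂ => ‖z‖)).prod := by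
          apply pow_card_le_prod_aux _ (norm_nonneg lam)
          intro x hx
          obtain ⟨μ, hμ, rfl⟩ := Multiset.mem_map.1 hx
          exact hmin μ (Polynomial.isRoot_of_mem_roots hμ)
  set x : ℝ := ‖lam‖ ^ 2 with hx
  have hx0 : 0 ≤ x := sq_nonneg _
  have h2 : x ^ n ≤ ‖p.coeff 0‖ ^ 2 := by
    rw [hx, ← pow_mul, mul_comm 2 n, pow_mul]
    exact pow_le_pow_left₀ (pow_nonneg (norm_nonneg _) n) h1 2
  -- Bernoulli: n * x ≤ (n-1) + x^n
  have hbern : (n : ℝ) * x ≤ (n - 1 : ℝ) + x ^ n := by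
    have h := one_add_mul_le_pow (a := x - 1) (by nlinarith) n
    have e : (1 + (x - 1) : ℝ) = x := by ring
    rw [e] at h
    nlinarith
  set S : ℝ := (n - 1 : ℝ) + ∑ i ∈ Finset.range n, ‖p.coeff i‖ ^ 2 with hS
  have hsum : ‖p.coeff 0‖ ^ 2 ≤ ∑ i ∈ Finset.range n, ‖p.coeff i‖ ^ 2 := by
    apply Finset.single_le_sum (f := fun i => ‖p.coeff i‖ ^ 2)
    · intro i _; positivity
    · exact Finset.mem_range.2 (by omega)
  have hnpos : (0 : ℝ) < n := by positivity
  have h3 : (n : ℝ) * x ≤ S := by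
    calc (n : ℝ) * x ≤ (n - 1 : ℝ) + x ^ n := hbern
      _ ≤ (n - 1 : ℝ) + ‖p.coeff 0‖ ^ 2 := by linarith
      _ ≤ S := by rw [hS]; linarith
  have hS0 : 0 ≤ S := le_trans (by positivity) h3
  have h4 : x ≤ S / n := (le_div_iff₀ hnpos).2 (by linarith [h3, mul_comm (n:ℝ) x])
  have h5 : ‖lam‖ ≤ Real.sqrt (S / n) := by
    rw [← Real.sqrt_sq (norm_nonneg lam)]
    exact Real.sqrt_le_sqrt h4
  calc ‖lam‖ ≤ Real.sqrt (S / n) := h5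
    _ = (1 / n) * Real.sqrt (n * S) := by
        have e1 : Real.sqrt ((n : ℝ) * S) = Real.sqrt n * Real.sqrt S :=
          Real.sqrt_mul hnpos.le S
        have e2 : Real.sqrt (S / n) = Real.sqrt S / Real.sqrt n := Real.sqrt_div hS0 n
        have hsn : Real.sqrt n ≠ 0 := by positivity
        rw [e2, e1]
        field_simp
        nlinarith [Real.mul_self_sqrt hnpos.le, Real.sqrt_nonneg S, Real.sqrt_nonneg (n : ℝ)]
end
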